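/- For integers a > 1 and n with a^x < n ≤ a^{x+1}, there exists an injective labeling L : [n] → {0,1,...,a}^{x+1} such that for every position d ∈ [x+1] and every letter c ∈ {0,...,a}, the number of elements j ∈ [n] with the d-th letter of L(j) equal to c is at most ⌈n/a⌉. -/

import Mathlib

open Finset

/-- Base-`a` digits determine a number below `a ^ x`. -/
lemma digits_eq_inj (a : ℕ) (ha : 0 < a) : ∀ (x u v : ℕ), u < a ^ x → v < a ^ x →
    (∀ d < x, u / a ^ d % a = v / a ^ d % a) → u = v := by
  intro x
  induction x with
  | zero =>
    intro u v hu hv _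
    simp only [pow_zero, Nat.lt_one_iff] at hu hv
    omega
  | succ x ih =>
    intro u v hu hv h
    have h0 : u % a = v % a := by simpa using h 0 (Nat.succ_pos x)
    have h1 : u / a = v / a := by
      apply ih
      · exact (Nat.div_lt_iff_lt_mul ha).mpr (by rwa [← pow_succ])
      · exact (Nat.div_lt_iff_lt_mul ha).mpr (by rwa [← pow_succ])
      · intro d hd
        have := h (d + 1) (by omega)
        rwa [pow_succ', ← Nat.div_div_eq_div_mul, ← Nat.div_div_eq_div_mul] at this
    have hu' := Nat.div_add_mod u a
    have hv' := Nat.div_add_mod v a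
    calc u = a * (u / a) + u % a := (Nat.div_add_mod u a).symm
    _ = a * (v / a) + v % a := by rw [h0, h1]
    _ = v := Nat.div_add_mod v a

/-- labeling procedure: for `a > 1` and `a^x < n ≤ a^{x+1}`, there is an
injective labeling of `[n]` by strings of length `x+1` over the alphabet `{0,…,a}` such
that in every position each letter is used at most `⌈n/a⌉` times. -/
theorem exists_balanced_labeling (a x n : ℕ) (ha : 1 < a)
    (h₁ : a ^ x < n) (h₂ : n ≤ a ^ (x + 1)) :
    ∃ L : Fin n → (Fin (x + 1) → Fin (a + 1)),
      Function.Injective L ∧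
      ∀ (d : Fin (x + 1)) (c : Fin (a + 1)),
        (Finset.univ.filter (fun j : Fin n => L j d = c)).card ≤ ⌈(n : ℝ) / a⌉₊ := by
  have ha0 : 0 < a := by omega
  have hn0 : 0 < n := by
    have : 0 < a ^ x := Nat.pow_pos ha0
    omega
  set q : ℕ := (n + a - 1) / a with hq_def
  have hq0 : 0 < q := Nat.div_pos (by omega) ha0
  -- n ≤ a * q
  have hnq : n ≤ a * q := by
    have h2 : a * q + (n + a - 1) % a = n + a - 1 := by
      rw [hq_def]; exact Nat.div_add_mod _ _
    have h3 : (n + a - 1) % a < a := Nat.mod_lt _ ha0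
    omega
  -- q ≤ a ^ x
  have hqx : q ≤ a ^ x := by
    have hmul : (a ^ x + 1) * a = a ^ (x + 1) + a := by
      rw [add_mul, one_mul, ← pow_succ]
    have : q < a ^ x + 1 := by
      rw [hq_def, Nat.div_lt_iff_lt_mul ha0, hmul]
      omega
    omega
  -- q ≤ ⌈n/a⌉
  have hqceil : q ≤ ⌈(n : ℝ) / a⌉₊ := by
    have hq_eq : q = (n - 1) / a + 1 := by
      rw [hq_def, show n + a - 1 = (n - 1) + a by omega, Nat.add_div_right _ ha0]
    rw [hq_eq, Nat.add_one_le_iff, Nat.lt_ceil,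
      lt_div_iff₀ (by exact_mod_cast ha0 : (0 : ℝ) < a)]
    calc (((n - 1) / a : ℕ) : ℝ) * a = (((n - 1) / a) * a : ℕ) := by push_cast; ring
    _ ≤ ((n - 1 : ℕ) : ℝ) := by exact_mod_cast Nat.div_mul_le_self _ _
    _ < n := by exact_mod_cast Nat.sub_lt hn0 one_pos
  -- group index is < a
  have hia : ∀ j : Fin n, j.val / q < a := by
    intro j
    exact (Nat.div_lt_iff_lt_mul hq0).mpr (lt_of_lt_of_le j.isLt hnq)
  -- the labeling
  have hLbound : ∀ (j : Fin n) (d : Fin (x + 1)),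
      (if (d : ℕ) = x then j.val / q
        else (j.val % q / a ^ (d : ℕ) % a + j.val / q) % a) < a + 1 := by
    intro j d
    split
    · exact lt_trans (hia j) (Nat.lt_succ_self a)
    · exact lt_trans (Nat.mod_lt _ ha0) (Nat.lt_succ_self a)
  refine ⟨fun j d => ⟨_, hLbound j d⟩, ?_, ?_⟩
  · -- injectivity
    intro j j' hjj
    have htop : j.val / q = j'.val / q := by
      have := congrFun hjj ⟨x, Nat.lt_succ_self x⟩
      simpa [Fin.ext_iff] using this
    have hdig : ∀ d < x, j.val % q / a ^ d % a = j'.val % q / a ^ d % a := by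
      intro d hd
      have hcf := congrFun hjj ⟨d, by omega⟩
      rw [Fin.ext_iff] at hcf
      simp only [if_neg (show ¬ ((⟨d, by omega⟩ : Fin (x + 1)) : ℕ) = x from by simpa using Nat.ne_of_lt hd)] at hcf
      rw [htop] at hcf
      have hmeq : j.val % q / a ^ d % a ≡ j'.val % q / a ^ d % a [MOD a] :=
        Nat.ModEq.add_right_cancel' _ hcf
      have h1 : j.val % q / a ^ d % a < a := Nat.mod_lt _ ha0
      have h2 : j'.val % q / a ^ d % a < a := Nat.mod_lt _ ha0
      rwa [Nat.ModEq, Nat.mod_eq_of_lt h1, Nat.mod_eq_of_lt h2] at hmeq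
    have hmod : j.val % q = j'.val % q := by
      apply digits_eq_inj a ha0 x
      · exact lt_of_lt_of_le (Nat.mod_lt _ hq0) hqx
      · exact lt_of_lt_of_le (Nat.mod_lt _ hq0) hqx
      · exact hdig
    have hj : j.val = q * (j'.val / q) + j'.val % q := by
      rw [← htop, ← hmod]; exact (Nat.div_add_mod _ _).symm
    have hj' := Nat.div_add_mod j'.val q
    apply Fin.ext
    omega
  · -- counting
    intro d c
    refine le_trans ?_ hqceil
    have : (Finset.univ.filter (fun j : Fin n =>
        (⟨_, hLbound j d⟩ : Fin (a + 1)) = c)).card ≤ (Finset.univ : Finset (Fin q)).card := by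
      apply Finset.card_le_card_of_injOn (fun j => (⟨j.val % q, Nat.mod_lt _ hq0⟩ : Fin q))
      · intro _ _; exact mem_univ _
      · intro j hj j' hj' hmm
        simp only [mem_coe, mem_filter, mem_univ, true_and] at hj hj'
        have hc : (⟨_, hLbound j d⟩ : Fin (a + 1)) = ⟨_, hLbound j' d⟩ := hj.trans hj'.symm
        rw [Fin.mk.injEq] at hc
        have hmod : j.val % q = j'.val % q := by simpa [Fin.ext_iff] using hmm
        have htop : j.val / q = j'.val / q := by
          by_cases hdx : (d : ℕ) = x
          · simpa [if_pos hdx] using hc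
          · rw [if_neg hdx, if_neg hdx, hmod] at hc
            have hmeq : j.val / q ≡ j'.val / q [MOD a] :=
              Nat.ModEq.add_left_cancel' _ hc
            rwa [Nat.ModEq, Nat.mod_eq_of_lt (hia j), Nat.mod_eq_of_lt (hia j')] at hmeq
        have hj2 : j.val = q * (j'.val / q) + j'.val % q := by
          rw [← htop, ← hmod]; exact (Nat.div_add_mod _ _).symm
        have hj'2 := Nat.div_add_mod j'.val q
        apply Fin.ext
        omega
    simpa using this
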